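/- Among the 13-element subsets of Fin 4 × Fin 13 (the hands dealt in four-player Big Two): the number containing a straight equals 355161047872, the number containing a flush equals 412247470340, and the number containing a full house equals 307061893424; in particular the flush count exceeds the straight count, which exceeds the full house count. -/

import Mathlib

attribute [local instance] Classical.propDecidable

/-- A hand contains a flush if some suit appears on at least 5 of its cards. -/
def HasFlush (H : Finset (Fin 4 × Fin 13)) : Prop :=
  ∃ s : Fin 4, 5 ≤ (H.filter (fun c => c.1 = s)).card

/-- A hand contains a full house if some rank appears on ≥3 cards and a different
rank appears on ≥2 cards. -/
def HasFullHouse (H : Finset (Fin 4 × Fin 13)) : Prop :=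
  ∃ r s : Fin 13, r ≠ s ∧ 3 ≤ (H.filter (fun c => c.2 = r)).card ∧
    2 ≤ (H.filter (fun c => c.2 = s)).card

/-- A set of ranks contains a run iffive consecutive ranks
starting at some i ≤ 9 all belong to it. -/
def HasRun (R : Finset (Fin 13)) : Prop :=
  ∃ i : ℕ, i ≤ 9 ∧ ∀ j : ℕ, j ≤ 4 →
    (⟨(i + j) % 13, Nat.mod_lt _ (by norm_num)⟩ : Fin 13) ∈ R

/-- A hand contains a straight if its set of ranks contains a run. -/
def HasStraight (H : Finset (Fin 4 × Fin 13)) : Prop :=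
  HasRun (H.image Prod.snd)

/-- Number of n-card hands containing a flush. -/
noncomputable def flushCount (n : ℕ) : ℕ :=
  ((Finset.univ.powersetCard n : Finset (Finset (Fin 4 × Fin 13))).filter HasFlush).card

/-- Number of n-card hands containing a full house. -/
noncomputable def fullHouseCount (n : ℕ) : ℕ :=
  ((Finset.univ.powersetCard n : Finset (Finset (Fin 4 × Fin 13))).filter HasFullHouse).card

/-- Number of n-card hands containing a straight. -/
noncomputable def straightCount (n : ℕ) : ℕ :=
  ((Finset.univ.powersetCard n : Finset (Finset (Fin 4 × Fin 13))).filter HasStraight).card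

/-! ### Auxiliary development -/

set_option maxRecDepth 1000000
set_option maxHeartbeats 8000000
set_option synthInstance.maxSize 1000
set_option linter.unusedSectionVars false

namespace BigTwoAux
open Finset

/-! #### Generic weighted automaton sums and their tabulation -/

section Generic

variable {Q : Type} (m : ℕ) (δ : Q → ℕ → Q) (w : ℕ → ℕ) (acc : Q → Bool)

def run : ℕ → Q → ℕ
  | 0, q => if acc q then 1 else 0
  | k+1, q => ∑ x ∈ Finset.range m, w x * run k (δ q x)

theorem run_eq (k : ℕ) (q : Q) :
    run m δ w acc k q = ∑ a : Fin k → Fin m,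
      (∏ i, w (a i)) * (if acc (List.foldl δ q (List.ofFn fun i => ((a i : ℕ)))) then 1 else 0) := by
  induction k generalizing q with
  | zero =>
      simp [run, List.ofFn_zero]
  | succ k ih =>
      have key := Fintype.sum_equiv (Fin.consEquiv fun _ : Fin (k+1) => Fin m)
        (fun p : Fin m × (Fin k → Fin m) =>
          (∏ i : Fin (k+1), w ((Fin.cons (α := fun _ => Fin m) p.1 p.2) i)) *
            (if acc (List.foldl δ q (List.ofFn fun i : Fin (k+1) =>
              (((Fin.cons (α := fun _ => Fin m) p.1 p.2) i : Fin m) : ℕ))) then 1 else 0))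
        (fun a : Fin (k+1) → Fin m =>
          (∏ i, w (a i)) * (if acc (List.foldl δ q (List.ofFn fun i => ((a i : ℕ)))) then 1 else 0))
        (fun p => rfl)
      rw [← key, Fintype.sum_prod_type]
      rw [show (run m δ w acc (k+1) q) = ∑ x ∈ Finset.range m, w x * run m δ w acc k (δ q x) from rfl]
      rw [Finset.sum_range fun x => w x * run m δ w acc k (δ q x)]
      refine Finset.sum_congr rfl fun x _ => ?_
      rw [ih, Finset.mul_sum]
      refine Finset.sum_congr rfl fun a _ => ?_
      have h2 : (List.ofFn fun i : Fin (k+1) => ((Fin.cons (α := fun _ => Fin m) x a i : Fin m) : ℕ))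
          = (x : ℕ) :: List.ofFn fun i : Fin k => ((a i : ℕ)) := by
        rw [List.ofFn_succ]; simp
      rw [h2]
      have h3 : ∏ i : Fin (k+1), w (Fin.cons (α := fun _ => Fin m) x a i : Fin m)
          = w x * ∏ i : Fin k, w (a i) := by
        rw [Fin.prod_univ_succ]; simp
      rw [h3]
      rw [List.foldl_cons, mul_assoc]

end Generic

section Table

variable {A B : Type} (m : ℕ) (δ : A × B → ℕ → A × B) (w : ℕ → ℕ) (acc : A × B → Bool)
variable (nA nB : ℕ) (idxA : A → ℕ) (idxB : B → ℕ) (encA : ℕ → A) (encB : ℕ → B)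

def look (l : List (List ℕ)) (q : A × B) : ℕ := (l.getD (idxA q.1) []).getD (idxB q.2) 0

def tblStep (l : List (List ℕ)) : List (List ℕ) :=
  (List.range nA).map fun i => (List.range nB).map fun j =>
    ∑ x ∈ Finset.range m, w x * look idxA idxB l (δ (encA i, encB j) x)

def tbl : ℕ → List (List ℕ)
  | 0 => (List.range nA).map fun i => (List.range nB).map fun j =>
      if acc (encA i, encB j) then 1 else 0
  | k+1 => tblStep m δ w nA nB idxA idxB encA encB (tbl k)

theorem getD_map_range {γ : Type} (d : γ) (f : ℕ → γ) {i n : ℕ} (h : i < n) :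
    (((List.range n).map f).getD i d) = f i := by
  rw [List.getD_eq_getElem?_getD, List.getElem?_map, List.getElem?_range h]
  rfl

theorem run_eq_tbl (hA1 : ∀ a : A, encA (idxA a) = a) (hA2 : ∀ a : A, idxA a < nA)
    (hB1 : ∀ b : B, encB (idxB b) = b) (hB2 : ∀ b : B, idxB b < nB) :
    ∀ (k : ℕ) (q : A × B),
      run m δ w acc k q = look idxA idxB (tbl m δ w acc nA nB idxA idxB encA encB k) q := by
  intro k
  induction k with
  | zero =>
      rintro ⟨a, b⟩
      show (if acc (a, b) then 1 else 0) = _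
      unfold look tbl
      rw [getD_map_range [] _ (hA2 a), getD_map_range 0 _ (hB2 b), hA1, hB1]
  | succ k ih =>
      rintro ⟨a, b⟩
      show (∑ x ∈ Finset.range m, w x * run m δ w acc k (δ (a, b) x)) = _
      unfold look tbl tblStep
      rw [getD_map_range [] _ (hA2 a), getD_map_range 0 _ (hB2 b), hA1, hB1]
      exact Finset.sum_congr rfl fun x _ => by rw [ih]

end Table

/-! #### foldl decomposition helpers -/

theorem foldl_pair {A B : Type} (δ : A × B → ℕ → A × B) (f : A → ℕ → A) (g : B → ℕ → B)
    (hδ : ∀ p x, δ p x = (f p.1 x, g p.2 x)) :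
    ∀ (l : List ℕ) (a : A) (b : B),
      List.foldl δ (a, b) l = (List.foldl f a l, List.foldl g b l)
  | [], _, _ => rfl
  | x :: l, a, b => by
      rw [List.foldl_cons, List.foldl_cons, List.foldl_cons, hδ]
      exact foldl_pair δ f g hδ l (f a x) (g b x)

def cadd (t : Fin 15) (x : ℕ) : Fin 15 := ⟨min 14 ((t : ℕ) + x), by omega⟩

theorem foldl_cadd : ∀ (l : List ℕ) (t : Fin 15),
    List.foldl cadd t l = ⟨min 14 ((t : ℕ) + l.sum), by omega⟩
  | [], t => by apply Fin.ext; simp [cadd]; omega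
  | x :: l, t => by
      rw [List.foldl_cons, foldl_cadd l (cadd t x)]
      apply Fin.ext
      simp [cadd, List.sum_cons]
      omega

theorem foldl_or (p : ℕ → Bool) : ∀ (l : List ℕ) (b : Bool),
    List.foldl (fun b x => b || p x) b l = (b || l.any p)
  | [], b => by simp
  | x :: l, b => by
      rw [List.foldl_cons, foldl_or p l (b || p x)]
      simp [Bool.or_assoc]

def cnt2 (c : Fin 3) (x : ℕ) : Fin 3 := ⟨min 2 ((c : ℕ) + if 2 ≤ x then 1 else 0), by omega⟩

theorem foldl_cnt2 : ∀ (l : List ℕ) (c : Fin 3),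
    List.foldl cnt2 c l = ⟨min 2 ((c : ℕ) + l.countP fun x => decide (2 ≤ x)), by omega⟩
  | [], c => by apply Fin.ext; simp [cnt2]; omega
  | x :: l, c => by
      rw [List.foldl_cons, foldl_cnt2 l (cnt2 c x)]
      apply Fin.ext
      simp only [cnt2, List.countP_cons]
      by_cases h : 2 ≤ x <;> simp [h] <;> omega

theorem countP_ofFn (p : ℕ → Bool) : ∀ {n : ℕ} (v : Fin n → ℕ),
    (List.ofFn v).countP p = ∑ i, (if p (v i) then 1 else 0) := by
  intro n
  induction n with
  | zero => intro v; simp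
  | succ n ih =>
      intro v
      rw [List.ofFn_succ, List.countP_cons, ih, Fin.sum_univ_succ]
      by_cases h : p (v 0) <;> simp [h] <;> omega

set_option linter.unnecessarySeqFocus false

/-! #### The three automata -/

-- flush
abbrev QLB := Bool
def δL : Fin 15 × QLB → ℕ → Fin 15 × QLB := fun q x => (cadd q.1 x, q.2 || decide (5 ≤ x))
def accL : Fin 15 × QLB → Bool := fun q => decide ((q.1 : ℕ) = 13) && q.2
def idxL : QLB → ℕ := fun b => if b then 1 else 0
def encL : ℕ → QLB := fun i => decide (i = 1)
def fenc (i : ℕ) : Fin 15 := ⟨min 14 i, by omega⟩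

theorem hfenc : ∀ t : Fin 15, fenc (t : ℕ) = t := by decide
theorem hfenc2 : ∀ t : Fin 15, (t : ℕ) < 15 := fun t => t.isLt
theorem hL1 : ∀ b : QLB, encL (idxL b) = b := by decide
theorem hL2 : ∀ b : QLB, idxL b < 2 := by decide

-- full house
abbrev QFB := Bool × Fin 3
def δF : Fin 15 × QFB → ℕ → Fin 15 × QFB :=
  fun q x => (cadd q.1 x, (q.2.1 || decide (3 ≤ x), cnt2 q.2.2 x))
def accF : Fin 15 × QFB → Bool :=
  fun q => decide ((q.1 : ℕ) = 13) && q.2.1 && decide ((q.2.2 : ℕ) = 2)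
def idxF : QFB → ℕ := fun s => (if s.1 then 3 else 0) + (s.2 : ℕ)
def encF : ℕ → QFB := fun i => (decide (3 ≤ i), ⟨i % 3, by omega⟩)

theorem hF1 : ∀ s : QFB, encF (idxF s) = s := by decide
theorem hF2 : ∀ s : QFB, idxF s < 6 := by decide

-- straight
abbrev SSt := Option (Bool × Bool × Bool × Bool × Bool × Bool)

def sstep : SSt → Bool → SSt
  | none, _ => none
  | some (st, f, b1, b2, b3, b4), p =>
      if st then (if b1 && b2 && b3 && b4 && p then none else some (true, f, b2, b3, b4, p))
      else some (true, p, false, false, false, p)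

def sacc : SSt → Bool
  | none => true
  | some (_, f, b1, b2, b3, b4) => f && b1 && b2 && b3 && b4

def s0 : SSt := some (false, false, false, false, false, false)

def bnum : Bool → ℕ | false => 0 | true => 1

def sidx : SSt → ℕ
  | none => 64
  | some (st, f, b1, b2, b3, b4) =>
      32 * bnum st + 16 * bnum f + 8 * bnum b1 + 4 * bnum b2 + 2 * bnum b3 + bnum b4

def senc (j : ℕ) : SSt :=
  if j ≥ 64 then none
  else some (decide (j / 32 % 2 = 1), decide (j / 16 % 2 = 1), decide (j / 8 % 2 = 1),
    decide (j / 4 % 2 = 1), decide (j / 2 % 2 = 1), decide (j % 2 = 1))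

theorem hS1 : ∀ s : SSt, senc (sidx s) = s := by decide
theorem hS2 : ∀ s : SSt, sidx s < 65 := by decide

def δS : Fin 15 × SSt → ℕ → Fin 15 × SSt := fun q x => (cadd q.1 x, sstep q.2 (decide (1 ≤ x)))
def accS : Fin 15 × SSt → Bool := fun q => decide ((q.1 : ℕ) = 13) && sacc q.2

/-! #### Straight window automaton: correctness -/

theorem auto13 : ∀ x0 x1 x2 x3 x4 x5 x6 x7 x8 x9 x10 x11 x12 : Bool,
    sacc (List.foldl sstep s0 [x0,x1,x2,x3,x4,x5,x6,x7,x8,x9,x10,x11,x12]) =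
      ((x0&&x1&&x2&&x3&&x4) || (x1&&x2&&x3&&x4&&x5) || (x2&&x3&&x4&&x5&&x6) ||
       (x3&&x4&&x5&&x6&&x7) || (x4&&x5&&x6&&x7&&x8) || (x5&&x6&&x7&&x8&&x9) ||
       (x6&&x7&&x8&&x9&&x10) || (x7&&x8&&x9&&x10&&x11) || (x8&&x9&&x10&&x11&&x12) ||
       (x9&&x10&&x11&&x12&&x0)) := by decide

theorem windows_iff (b : Fin 13 → Bool) :
    sacc (List.foldl sstep s0 (List.ofFn b)) = true ↔
      ∃ i : ℕ, i ≤ 9 ∧ ∀ j : ℕ, j ≤ 4 →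
        b ⟨(i + j) % 13, Nat.mod_lt _ (by norm_num)⟩ = true := by
  rw [show List.ofFn b = [b 0, b 1, b 2, b 3, b 4, b 5, b 6, b 7, b 8, b 9, b 10, b 11, b 12]
    from rfl]
  rw [auto13]
  simp only [Bool.or_eq_true, Bool.and_eq_true]
  constructor
  · rintro (((((((((h|h)|h)|h)|h)|h)|h)|h)|h)|h)
    · exact ⟨0, by norm_num, fun j hj => by interval_cases j <;>
        first | exact h.1.1.1.1 | exact h.1.1.1.2 | exact h.1.1.2 | exact h.1.2 | exact h.2⟩
    · exact ⟨1, by norm_num, fun j hj => by interval_cases j <;>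
        first | exact h.1.1.1.1 | exact h.1.1.1.2 | exact h.1.1.2 | exact h.1.2 | exact h.2⟩
    · exact ⟨2, by norm_num, fun j hj => by interval_cases j <;>
        first | exact h.1.1.1.1 | exact h.1.1.1.2 | exact h.1.1.2 | exact h.1.2 | exact h.2⟩
    · exact ⟨3, by norm_num, fun j hj => by interval_cases j <;>
        first | exact h.1.1.1.1 | exact h.1.1.1.2 | exact h.1.1.2 | exact h.1.2 | exact h.2⟩
    · exact ⟨4, by norm_num, fun j hj => by interval_cases j <;>
        first | exact h.1.1.1.1 | exact h.1.1.1.2 | exact h.1.1.2 | exact h.1.2 | exact h.2⟩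
    · exact ⟨5, by norm_num, fun j hj => by interval_cases j <;>
        first | exact h.1.1.1.1 | exact h.1.1.1.2 | exact h.1.1.2 | exact h.1.2 | exact h.2⟩
    · exact ⟨6, by norm_num, fun j hj => by interval_cases j <;>
        first | exact h.1.1.1.1 | exact h.1.1.1.2 | exact h.1.1.2 | exact h.1.2 | exact h.2⟩
    · exact ⟨7, by norm_num, fun j hj => by interval_cases j <;>
        first | exact h.1.1.1.1 | exact h.1.1.1.2 | exact h.1.1.2 | exact h.1.2 | exact h.2⟩
    · exact ⟨8, by norm_num, fun j hj => by interval_cases j <;>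
        first | exact h.1.1.1.1 | exact h.1.1.1.2 | exact h.1.1.2 | exact h.1.2 | exact h.2⟩
    · exact ⟨9, by norm_num, fun j hj => by interval_cases j <;>
        first | exact h.1.1.1.1 | exact h.1.1.1.2 | exact h.1.1.2 | exact h.1.2 | exact h.2⟩
  · rintro ⟨i, hi, hj⟩
    interval_cases i
    · have c0 : b 0 = true := hj 0 (by norm_num)
      have c1 : b 1 = true := hj 1 (by norm_num)
      have c2 : b 2 = true := hj 2 (by norm_num)
      have c3 : b 3 = true := hj 3 (by norm_num)
      have c4 : b 4 = true := hj 4 (by norm_num)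
      simp [c0, c1, c2, c3, c4]
    · have c0 : b 1 = true := hj 0 (by norm_num)
      have c1 : b 2 = true := hj 1 (by norm_num)
      have c2 : b 3 = true := hj 2 (by norm_num)
      have c3 : b 4 = true := hj 3 (by norm_num)
      have c4 : b 5 = true := hj 4 (by norm_num)
      simp [c0, c1, c2, c3, c4]
    · have c0 : b 2 = true := hj 0 (by norm_num)
      have c1 : b 3 = true := hj 1 (by norm_num)
      have c2 : b 4 = true := hj 2 (by norm_num)
      have c3 : b 5 = true := hj 3 (by norm_num)
      have c4 : b 6 = true := hj 4 (by norm_num)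
      simp [c0, c1, c2, c3, c4]
    · have c0 : b 3 = true := hj 0 (by norm_num)
      have c1 : b 4 = true := hj 1 (by norm_num)
      have c2 : b 5 = true := hj 2 (by norm_num)
      have c3 : b 6 = true := hj 3 (by norm_num)
      have c4 : b 7 = true := hj 4 (by norm_num)
      simp [c0, c1, c2, c3, c4]
    · have c0 : b 4 = true := hj 0 (by norm_num)
      have c1 : b 5 = true := hj 1 (by norm_num)
      have c2 : b 6 = true := hj 2 (by norm_num)
      have c3 : b 7 = true := hj 3 (by norm_num)
      have c4 : b 8 = true := hj 4 (by norm_num)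
      simp [c0, c1, c2, c3, c4]
    · have c0 : b 5 = true := hj 0 (by norm_num)
      have c1 : b 6 = true := hj 1 (by norm_num)
      have c2 : b 7 = true := hj 2 (by norm_num)
      have c3 : b 8 = true := hj 3 (by norm_num)
      have c4 : b 9 = true := hj 4 (by norm_num)
      simp [c0, c1, c2, c3, c4]
    · have c0 : b 6 = true := hj 0 (by norm_num)
      have c1 : b 7 = true := hj 1 (by norm_num)
      have c2 : b 8 = true := hj 2 (by norm_num)
      have c3 : b 9 = true := hj 3 (by norm_num)
      have c4 : b 10 = true := hj 4 (by norm_num)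
      simp [c0, c1, c2, c3, c4]
    · have c0 : b 7 = true := hj 0 (by norm_num)
      have c1 : b 8 = true := hj 1 (by norm_num)
      have c2 : b 9 = true := hj 2 (by norm_num)
      have c3 : b 10 = true := hj 3 (by norm_num)
      have c4 : b 11 = true := hj 4 (by norm_num)
      simp [c0, c1, c2, c3, c4]
    · have c0 : b 8 = true := hj 0 (by norm_num)
      have c1 : b 9 = true := hj 1 (by norm_num)
      have c2 : b 10 = true := hj 2 (by norm_num)
      have c3 : b 11 = true := hj 3 (by norm_num)
      have c4 : b 12 = true := hj 4 (by norm_num)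
      simp [c0, c1, c2, c3, c4]
    · have c0 : b 9 = true := hj 0 (by norm_num)
      have c1 : b 10 = true := hj 1 (by norm_num)
      have c2 : b 11 = true := hj 2 (by norm_num)
      have c3 : b 12 = true := hj 3 (by norm_num)
      have c4 : b 0 = true := hj 4 (by norm_num)
      simp [c0, c1, c2, c3, c4]

/-! #### Condition predicates on column-count vectors -/

def Vflush (v : Fin 4 → ℕ) : Prop := ∃ s, 5 ≤ v s

def Vfull (v : Fin 13 → ℕ) : Prop := ∃ r s, r ≠ s ∧ 3 ≤ v r ∧ 2 ≤ v s

def Vrun' (v : Fin 13 → ℕ) : Prop :=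
  ∃ i : ℕ, i ≤ 9 ∧ ∀ j : ℕ, j ≤ 4 → 1 ≤ v ⟨(i + j) % 13, Nat.mod_lt _ (by norm_num)⟩

theorem cadd_foldl_eq13 (l : List ℕ) :
    ((List.foldl cadd 0 l : Fin 15) : ℕ) = 13 ↔ l.sum = 13 := by
  rw [foldl_cadd]
  show min 14 ((0 : ℕ) + l.sum) = 13 ↔ _
  omega

theorem flush_cond (v : Fin 4 → Fin 14) :
    accL (List.foldl δL (0, false) (List.ofFn fun i => ((v i : ℕ)))) = true ↔
      ((∑ a, (v a : ℕ)) = 13 ∧ Vflush fun a => (v a : ℕ)) := by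
  have h1 : List.foldl δL (0, false) (List.ofFn fun i => ((v i : ℕ)))
      = (List.foldl cadd 0 (List.ofFn fun i => ((v i : ℕ))),
         List.foldl (fun b x => b || decide (5 ≤ x)) false (List.ofFn fun i => ((v i : ℕ)))) :=
    foldl_pair δL cadd (fun (b : Bool) x => b || decide (5 ≤ x)) (fun p x => rfl) _ 0 false
  rw [h1, foldl_or]
  show (decide _ && _) = true ↔ _
  rw [Bool.and_eq_true, decide_eq_true_iff, Bool.false_or, cadd_foldl_eq13, List.sum_ofFn]
  refine and_congr Iff.rfl ?_
  rw [List.any_eq_true]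
  constructor
  · rintro ⟨x, hx, h5⟩
    obtain ⟨i, rfl⟩ := List.mem_ofFn.1 hx
    exact ⟨i, of_decide_eq_true h5⟩
  · rintro ⟨s, hs⟩
    exact ⟨(v s : ℕ), List.mem_ofFn.2 ⟨s, rfl⟩, decide_eq_true hs⟩

theorem cnt2_foldl_eq2 (l : List ℕ) :
    ((List.foldl cnt2 0 l : Fin 3) : ℕ) = 2 ↔ 2 ≤ l.countP fun x => decide (2 ≤ x) := by
  rw [foldl_cnt2]
  show min 2 ((0 : ℕ) + _) = 2 ↔ _
  omega

theorem any_ofFn_iff {n : ℕ} (p : ℕ → Prop) [DecidablePred p] (v : Fin n → ℕ) :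
    ((List.ofFn v).any fun x => decide (p x)) = true ↔ ∃ i, p (v i) := by
  rw [List.any_eq_true]
  constructor
  · rintro ⟨x, hx, hp⟩
    obtain ⟨i, rfl⟩ := List.mem_ofFn.1 hx
    exact ⟨i, of_decide_eq_true hp⟩
  · rintro ⟨i, hi⟩
    exact ⟨v i, List.mem_ofFn.2 ⟨i, rfl⟩, decide_eq_true hi⟩

theorem countP2_iff {n : ℕ} (v : Fin n → ℕ) :
    2 ≤ ((List.ofFn v).countP fun x => decide (2 ≤ x)) ↔
      ∃ r s, r ≠ s ∧ 2 ≤ v r ∧ 2 ≤ v s := by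
  rw [countP_ofFn]
  have hcard : (∑ i, if decide (2 ≤ v i) = true then 1 else 0)
      = (Finset.univ.filter fun i => 2 ≤ v i).card := by
    rw [Finset.card_filter]
    exact Finset.sum_congr rfl fun i _ => if_congr (decide_eq_true_iff) rfl rfl
  rw [hcard]
  constructor
  · intro h
    have h1 : 1 < (Finset.univ.filter fun i => 2 ≤ v i).card := by omega
    obtain ⟨a, ha, b, hb, hab⟩ := Finset.one_lt_card.1 h1
    simp only [Finset.mem_filter] at ha hb
    exact ⟨a, b, hab, ha.2, hb.2⟩
  · rintro ⟨r, s, hrs, hr, hs⟩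
    have h1 :1 < (Finset.univ.filter fun i => 2 ≤ v i).card :=
      Finset.one_lt_card.2 ⟨r, by simp [hr], s, by simp [hs], hrs⟩
    omega

theorem Vfull_iff (v : Fin 13 → ℕ) :
    Vfull v ↔ ((∃ r, 3 ≤ v r) ∧ ∃ r s, r ≠ s ∧ 2 ≤ v r ∧ 2 ≤ v s) := by
  constructor
  · rintro ⟨r, s, hrs, h3, h2⟩
    exact ⟨⟨r, h3⟩, r, s, hrs, by omega, h2⟩
  · rintro ⟨⟨r0, h3⟩, r, s, hrs, h2r, h2s⟩
    by_cases h : r0 = s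
    · exact ⟨r0, r, fun e => hrs (e.symm.trans h), h3, h2r⟩
    · exact ⟨r0, s, h, h3, h2s⟩

theorem fh_cond (v : Fin 13 → Fin 5) :
    accF (List.foldl δF (0, (false, 0)) (List.ofFn fun i => ((v i : ℕ)))) = true ↔
      ((∑ a, (v a : ℕ)) = 13 ∧ Vfull fun a => (v a : ℕ)) := by
  have h1 : List.foldl δF (0, (false, 0)) (List.ofFn fun i => ((v i : ℕ)))
      = (List.foldl cadd 0 (List.ofFn fun i => ((v i : ℕ))),
         List.foldl (fun (s : Bool × Fin 3) x => (s.1 || decide (3 ≤ x), cnt2 s.2 x))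
           (false, 0) (List.ofFn fun i => ((v i : ℕ)))) :=
    foldl_pair δF cadd (fun (s : Bool × Fin 3) x => (s.1 || decide (3 ≤ x), cnt2 s.2 x)) (fun p x => rfl) _ 0 (false, 0)
  have h2 : List.foldl (fun (s : Bool × Fin 3) x => (s.1 || decide (3 ≤ x), cnt2 s.2 x))
      (false, 0) (List.ofFn fun i => ((v i : ℕ)))
      = (List.foldl (fun b x => b || decide (3 ≤ x)) false (List.ofFn fun i => ((v i : ℕ))),
         List.foldl cnt2 0 (List.ofFn fun i => ((v i : ℕ)))) :=
    foldl_pair _ (fun (b : Bool) x => b || decide (3 ≤ x)) cnt2 (fun p x => rfl) _ false 0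
  rw [h1, h2, foldl_or]
  show (decide _ && _ && decide _) = true ↔ _
  rw [Bool.and_eq_true, Bool.and_eq_true, decide_eq_true_iff, decide_eq_true_iff,
    cadd_foldl_eq13, List.sum_ofFn, Bool.false_or, cnt2_foldl_eq2,
    any_ofFn_iff (fun x => 3 ≤ x) (fun i => ((v i : ℕ))), countP2_iff]
  constructor
  · rintro ⟨⟨hsum, hany⟩, h2c⟩
    exact ⟨hsum, (Vfull_iff _).2 ⟨hany, h2c⟩⟩
  · rintro ⟨hsum, hful⟩
    obtain ⟨hany, h2c⟩ := (Vfull_iff _).1 hful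
    exact ⟨⟨hsum, hany⟩, h2c⟩

theorem straight_cond (v : Fin 13 → Fin 5) :
    accS (List.foldl δS (0, s0) (List.ofFn fun i => ((v i : ℕ)))) = true ↔
      ((∑ a, (v a : ℕ)) = 13 ∧ Vrun' fun a => (v a : ℕ)) := by
  have h1 : List.foldl δS (0, s0) (List.ofFn fun i => ((v i : ℕ)))
      = (List.foldl cadd 0 (List.ofFn fun i => ((v i : ℕ))),
         List.foldl (fun s x => sstep s (decide (1 ≤ x))) s0 (List.ofFn fun i => ((v i : ℕ)))) :=
    foldl_pair δS cadd (fun (s : SSt) x => sstep s (decide (1 ≤ x))) (fun p x => rfl) _ 0 s0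
  have h2 : List.foldl (fun s x => sstep s (decide (1 ≤ x))) s0 (List.ofFn fun i => ((v i : ℕ)))
      = List.foldl sstep s0 ((List.ofFn fun i => ((v i : ℕ))).map fun x => decide (1 ≤ x)) :=
    List.foldl_map.symm
  have h3 : (List.ofFn fun i => ((v i : ℕ))).map (fun x => decide (1 ≤ x))
      = List.ofFn fun i => decide (1 ≤ (v i : ℕ)) :=
    List.map_ofFn
  rw [h1, h2, h3]
  show (decide _ && _) = true ↔ _
  rw [Bool.and_eq_true, decide_eq_true_iff, cadd_foldl_eq13, List.sum_ofFn]
  refine and_congr Iff.rfl ?_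
  rw [windows_iff]
  exact exists_congr fun i => and_congr_right fun _ => forall_congr' fun j =>
    imp_congr_right fun _ => decide_eq_true_iff

/-! #### Counting hands by column-count vectors -/

section Count

variable {α β : Type*} [Fintype α] [Fintype β] [DecidableEq α] [DecidableEq β]

def colCard (H : Finset (α × β)) (a : α) : ℕ := (H.filter fun c => c.1 = a).card

theorem filter_irrel {γ : Type*} {p : γ → Prop} (h1 h2 : DecidablePred p) (s : Finset γ) :
    @Finset.filter γ p h1 s = @Finset.filter γ p h2 s := by
  ext c
  simp only [Finset.mem_filter]

theorem colCard_eq_image_card (H : Finset (α × β)) (a : α) :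
    colCard H a = ((H.filter fun c => c.1 = a).image Prod.snd).card := by
  refine (Finset.card_image_of_injOn ?_).symm
  intro x hx y hy hxy
  simp only [coe_filter, Set.mem_setOf_eq] at hx hy
  exact Prod.ext (hx.2.trans hy.2.symm) hxy

theorem colCard_le (H : Finset (α × β)) (a : α) : colCard H a ≤ Fintype.card β := by
  rw [colCard_eq_image_card]
  exact (Finset.card_le_univ _).trans (le_of_eq (Finset.card_univ))

theorem card_eq_sum_colCard (H : Finset (α × β)) : H.card = ∑ a, colCard H a :=
  Finset.card_eq_sum_card_fiberwise (f := Prod.fst) (fun x _ => Finset.mem_univ x.1)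

def colVec (H : Finset (α × β)) (a : α) : Fin (Fintype.card β + 1) :=
  ⟨colCard H a, Nat.lt_succ_of_le (colCard_le H a)⟩

@[simp] theorem colVec_coe (H : Finset (α × β)) (a : α) : (colVec H a : ℕ) = colCard H a := rfl

theorem fiber_card (v : α → Fin (Fintype.card β + 1)) :
    ((univ : Finset (Finset (α × β))).filter fun H => colVec H = v).card
      = ∏ a, (Fintype.card β).choose (v a) := by
  have step1 : ((univ : Finset (Finset (α × β))).filter fun H => colVec H = v).card
      = (Fintype.piFinset (fun a => Finset.powersetCard (v a) (univ : Finset β))).card := by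
    refine Finset.card_bij'
      (fun H _ => fun a => (H.filter fun c => c.1 = a).image Prod.snd)
      (fun f _ => (univ : Finset (α × β)).filter fun c => c.2 ∈ f c.1) ?_ ?_ ?_ ?_
    · intro H hH
      simp only [mem_filter, mem_univ, true_and] at hH
      rw [Fintype.mem_piFinset]
      intro a
      rw [Finset.mem_powersetCard_univ, ← colCard_eq_image_card]
      exact congrArg Fin.val (congrFun hH a)
    · intro f hf
      simp only [Fintype.mem_piFinset] at hf
      simp only [mem_filter, mem_univ, true_and]
      funext a
      apply Fin.ext
      show colCard _ a = (v a : ℕ)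
      have h2 : ((univ.filter fun c : α × β => c.2 ∈ f c.1).filter fun c => c.1 = a)
          = (f a).image (fun b => (a, b)) := by
        ext c
        simp only [mem_filter, mem_univ, true_and, mem_image]
        constructor
        · rintro ⟨h1, h2⟩
          exact ⟨c.2, h2 ▸ h1, by rw [← h2]⟩
        · rintro ⟨b, hb, rfl⟩
          exact ⟨hb, rfl⟩
      rw [colCard, h2, Finset.card_image_of_injective _ (fun x y h => (Prod.ext_iff.1 h).2)]
      have := hf a
      rwa [Finset.mem_powersetCard_univ] at this
    · intro H _
      ext c
      simp only [mem_filter, mem_univ, true_and, mem_image, mem_filter]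
      constructor
      · rintro ⟨d, ⟨hd, hd1⟩, hd2⟩
        have : d = c := Prod.ext hd1 hd2
        rwa [← this]
      · intro hc
        exact ⟨c, ⟨hc, rfl⟩, rfl⟩
    · intro f _
      funext a
      ext b
      simp only [mem_image, mem_filter, mem_univ, true_and]
      constructor
      · rintro ⟨c, ⟨hc, hc1⟩, hc2⟩
        rwa [← hc2, ← hc1]
      · intro hb
        exact ⟨(a, b), ⟨hb, rfl⟩, rfl⟩
  rw [step1, Fintype.card_piFinset]
  exact Finset.prod_congr rfl fun a _ => by rw [Finset.card_powersetCard, Finset.card_univ]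

theorem count_main (n : ℕ) (P : Finset (α × β) → Prop) (V : (α → ℕ) → Prop)
    [DecidablePred P] [DecidablePred V]
    (hP : ∀ H : Finset (α × β), P H ↔ V (colCard H)) :
    (((univ : Finset (α × β)).powersetCard n).filter P).card
      = ∑ v : α → Fin (Fintype.card β + 1),
          if ((∑ a, (v a : ℕ)) = n ∧ V fun a => (v a : ℕ)) then
            ∏ a, (Fintype.card β).choose (v a) else 0 := by
  classical
  have hset : ((univ : Finset (α × β)).powersetCard n).filter P
      = (univ : Finset (Finset (α × β))).filter
          (fun H => (∑ a, (colVec H a : ℕ)) = n ∧ V fun a => (colVec H a : ℕ)) := by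
    ext H
    rw [mem_filter, mem_filter]
    simp only [mem_filter, Finset.mem_powersetCard_univ, mem_univ, true_and, colVec_coe]
    constructor
    · rintro ⟨hcard, hp⟩
      exact ⟨by rw [← card_eq_sum_colCard]; exact hcard, (hP H).1 hp⟩
    · rintro ⟨hcard, hv⟩
      exact ⟨by rw [card_eq_sum_colCard]; exact hcard, (hP H).2 hv⟩
  rw [hset]
  rw [Finset.card_filter]
  rw [← Finset.sum_fiberwise (univ : Finset (Finset (α × β))) colVec
    (fun H => if ((∑ a, (colVec H a : ℕ)) = n ∧ V fun a => (colVec H a : ℕ)) then 1 else 0)]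
  refine Finset.sum_congr rfl fun v _ => ?_
  have hcong : ∀ H ∈ (univ : Finset (Finset (α × β))).filter fun H => colVec H = v,
      (if ((∑ a, (colVec H a : ℕ)) = n ∧ V fun a => (colVec H a : ℕ)) then (1:ℕ) else 0)
        = (if ((∑ a, (v a : ℕ)) = n ∧ V fun a => (v a : ℕ)) then 1 else 0) := by
    intro H hH
    simp only [mem_filter] at hH
    rw [← hH.2]
  rw [Finset.sum_congr rfl hcong, Finset.sum_const, smul_eq_mul]
  by_cases h : ((∑ a, (v a : ℕ)) = n ∧ V fun a => (v a : ℕ))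
  · rw [if_pos h, if_pos h, mul_one, fiber_card]
  · rw [if_neg h, if_neg h, mul_zero]

theorem count_main' (N n : ℕ) (hN : Fintype.card β = N)
    (P : Finset (α × β) → Prop) (V : (α → ℕ) → Prop)
    [DecidablePred P] [DecidablePred V]
    (hP : ∀ H : Finset (α × β), P H ↔ V (colCard H)) :
    (((univ : Finset (α × β)).powersetCard n).filter P).card
      = ∑ v : α → Fin (N + 1),
          if ((∑ a, (v a : ℕ)) = n ∧ V fun a => (v a : ℕ)) then
            ∏ a, N.choose (v a) else 0 := by
  subst hN
  exact count_main n P V hP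

theorem image_swap_swap (S : Finset (α × β)) :
    (S.image Prod.swap).image Prod.swap = S := by
  rw [Finset.image_image, Prod.swap_swap_eq, Finset.image_id]

theorem card_swap (n : ℕ) (P : Finset (α × β) → Prop) [DecidablePred P] :
    (((univ : Finset (α × β)).powersetCard n).filter P).card
      = (((univ : Finset (β × α)).powersetCard n).filter
          fun K => P (K.image Prod.swap)).card := by
  classical
  refine Finset.card_bij' (fun H _ => H.image Prod.swap) (fun K _ => K.image Prod.swap)
    ?_ ?_ ?_ ?_
  · intro H hH
    simp only [mem_filter, Finset.mem_powersetCard_univ] at hH ⊢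
    refine ⟨?_, ?_⟩
    · rw [Finset.card_image_of_injective _ Prod.swap_injective]
      exact hH.1
    · rw [image_swap_swap]
      exact hH.2
  · intro K hK
    simp only [mem_filter, Finset.mem_powersetCard_univ] at hK ⊢
    exact ⟨by rw [Finset.card_image_of_injective _ Prod.swap_injective]; exact hK.1, hK.2⟩
  · intro H _
    exact image_swap_swap H
  · intro K _
    exact image_swap_swap K

end Count

end BigTwoAux

namespace BigTwoAux
open Finset

/-! #### The three hand predicates in terms of column counts -/

theorem card_filter_fst (H : Finset (Fin 4 × Fin 13)) (s : Fin 4)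
    (h : DecidablePred fun c : Fin 4 × Fin 13 => c.1 = s) :
    (@Finset.filter _ _ h H).card = colCard H s := by
  unfold colCard
  exact congrArg Finset.card (filter_irrel _ _ _)

theorem hP_flush : ∀ H : Finset (Fin 4 × Fin 13), HasFlush H ↔ Vflush (colCard H) := by
  intro H
  unfold HasFlush Vflush
  exact exists_congr fun s => by rw [card_filter_fst H s]

theorem swap_filter_card (K : Finset (Fin 13 × Fin 4)) (r : Fin 13)
    (h : DecidablePred fun c : Fin 4 × Fin 13 => c.2 = r) :
    (@Finset.filter _ _ h (K.image Prod.swap)).card = colCard K r := by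
  have h1 : (@Finset.filter _ _ h (K.image Prod.swap))
      = (K.filter fun c => c.1 = r).image Prod.swap := by
    ext c
    simp only [Finset.mem_filter, Finset.mem_image]
    constructor
    · rintro ⟨⟨d, hd, rfl⟩, h2⟩
      exact ⟨d, ⟨hd, h2⟩, rfl⟩
    · rintro ⟨d, ⟨hd, h1⟩, rfl⟩
      exact ⟨⟨d, hd, rfl⟩, h1⟩
  rw [h1, Finset.card_image_of_injective _ Prod.swap_injective]
  unfold colCard
  exact congrArg Finset.card (filter_irrel _ _ _)

theorem hP_full : ∀ K : Finset (Fin 13 × Fin 4),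
    HasFullHouse (K.image Prod.swap) ↔ Vfull (colCard K) := by
  intro K
  unfold HasFullHouse Vfull
  refine exists_congr fun r => exists_congr fun s => ?_
  rw [swap_filter_card K r, swap_filter_card K s]

theorem mem_image_fst (K : Finset (Fin 13 × Fin 4)) (x : Fin 13) :
    x ∈ K.image Prod.fst ↔ 1 ≤ colCard K x := by
  unfold colCard
  constructor
  · intro hx
    obtain ⟨c, hc, rfl⟩ := Finset.mem_image.1 hx
    exact Finset.card_pos.2 ⟨c, Finset.mem_filter.2 ⟨hc, rfl⟩⟩
  · intro hx
    obtain ⟨c, hc⟩ := Finset.card_pos.1 hx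
    obtain ⟨hcK, hcx⟩ := Finset.mem_filter.1 hc
    exact Finset.mem_image.2 ⟨c, hcK, hcx⟩

theorem hP_straight : ∀ K : Finset (Fin 13 × Fin 4),
    HasStraight (K.image Prod.swap) ↔ Vrun' (colCard K) := by
  intro K
  unfold HasStraight HasRun Vrun'
  have him : (K.image Prod.swap).image Prod.snd = K.image Prod.fst := by
    rw [Finset.image_image]
    rfl
  rw [him]
  exact exists_congr fun i => and_congr_right fun _ => forall_congr' fun j =>
    imp_congr_right fun _ => mem_image_fst K _

/-! #### The three counts -/

theorem flushCount_13 : flushCount 13 = 412247470340 := by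
  rw [flushCount]
  rw [count_main' 13 13 (by simp) HasFlush Vflush hP_flush]
  refine Eq.trans (b := run 14 δL (Nat.choose 13) accL 4 (0, false)) ?_ ?_
  · rw [run_eq]
    refine Finset.sum_congr rfl fun v _ => ?_
    rw [mul_ite, mul_one, mul_zero]
    exact (if_congr (flush_cond v) rfl rfl).symm
  · rw [run_eq_tbl 14 δL (Nat.choose 13) accL 15 2 Fin.val idxL fenc encL
      hfenc hfenc2 hL1 hL2 4 (0, false)]
    decide

theorem fullHouseCount_13 : fullHouseCount 13 = 307061893424 := by
  rw [fullHouseCount]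
  rw [card_swap 13 HasFullHouse]
  rw [count_main' 4 13 (by simp) _ Vfull hP_full]
  refine Eq.trans (b := run 5 δF (Nat.choose 4) accF 13 (0, (false, 0))) ?_ ?_
  · rw [run_eq]
    refine Finset.sum_congr rfl fun v _ => ?_
    rw [mul_ite, mul_one, mul_zero]
    exact (if_congr (fh_cond v) rfl rfl).symm
  · rw [run_eq_tbl 5 δF (Nat.choose 4) accF 15 6 Fin.val idxF fenc encF
      hfenc hfenc2 hF1 hF2 13 (0, (false, 0))]
    decide

theorem straightCount_13 : straightCount 13 = 355161047872 := by
  rw [straightCount]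
  rw [card_swap 13 HasStraight]
  rw [count_main' 4 13 (by simp) _ Vrun' hP_straight]
  refine Eq.trans (b := run 5 δS (Nat.choose 4) accS 13 (0, s0)) ?_ ?_
  · rw [run_eq]
    refine Finset.sum_congr rfl fun v _ => ?_
    rw [mul_ite, mul_one, mul_zero]
    exact (if_congr (straight_cond v) rfl rfl).symm
  · rw [run_eq_tbl 5 δS (Nat.choose 4) accS 15 65 Fin.val sidx fenc senc
      hfenc hfenc2 hS1 hS2 13 (0, s0)]
    decide

end BigTwoAux

theorem bigtwo_thirteen_card_counts :
    straightCount 13 = 355161047872 ∧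
    flushCount 13 = 412247470340 ∧
    fullHouseCount 13 = 307061893424 ∧
    straightCount 13 < flushCount 13 ∧
    fullHouseCount 13 < straightCount 13 := by
  refine ⟨BigTwoAux.straightCount_13, BigTwoAux.flushCount_13, BigTwoAux.fullHouseCount_13, ?_, ?_⟩
  · rw [BigTwoAux.straightCount_13, BigTwoAux.flushCount_13]
    norm_num
  · rw [BigTwoAux.straightCount_13, BigTwoAux.fullHouseCount_13]
    norm_num
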